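/- (Lu's Barrow-type inequality.) Let A, B, C be affinely independent points of the Euclidean plane and let M be a point of the interior of the triangle ABC (the interior of the convex hull of {A, B, C}). Write R_A = |MA|, R_B = |MB|, R_C = |MC|. Let A' ∈ [B, C] with ∠BMA' = ∠CMA', let B' ∈ [C, A] with ∠CMB' = ∠AMB', and let C' ∈ [A, B] with ∠AMC' = ∠BMC', and write ℓ_a = |MA'|, ℓ_b = |MB'|, ℓ_c = |MC'|. Then R_A + R_B + R_C ≥ (√(R_C/R_B) + √(R_B/R_C))·ℓ_a + (√(R_C/R_A) + √(R_A/R_C))·ℓ_b + (√(R_A/R_B) + √(R_B/R_A))·ℓ_c. -/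

import Mathlib

open EuclideanGeometry Real

section Helpers

variable {E : Type*} [NormedAddCommGroup E] [InnerProductSpace ℝ E]

local notation "⟪" x ", " y "⟫" => @inner ℝ _ _ x y

/-- Sign of oriented angle equals sign of the area form. -/
lemma sign_oangle_eq_sign_areaForm [Fact (Module.finrank ℝ E = 2)]
    (o : Orientation ℝ E (Fin 2)) (x y : E) :
    (o.oangle x y).sign = SignType.sign (o.areaForm x y) := by
  by_cases hx : x = 0
  · simp [hx]
  by_cases hy : y = 0
  · simp [hy]
  have habs : ‖o.kahler x y‖ = ‖x‖ * ‖y‖ := o.norm_kahler x y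
  have him : (o.kahler x y).im = o.areaForm x y := by
    simp [o.kahler_apply_apply, Complex.add_im, Complex.smul_im]
  have hsin : Real.Angle.sin (o.oangle x y) = o.areaForm x y / (‖x‖ * ‖y‖) := by
    rw [Orientation.oangle, Real.Angle.sin_coe, Complex.sin_arg, him, habs]
  rw [Real.Angle.sign, hsin]
  have hpos : (0:ℝ) < ‖x‖ * ‖y‖ :=
    mul_pos (norm_pos_iff.2 hx) (norm_pos_iff.2 hy)
  rcases lt_trichotomy (o.areaForm x y) 0 with h | h | h
  · rw [sign_neg h, sign_neg (div_neg_of_neg_of_pos h hpos)]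
  · rw [h, zero_div]
  · rw [sign_pos h, sign_pos (div_pos h hpos)]

/-- Exact length bound for the internal bisector from the apex in a triangle. -/
lemma bisector_bound (p q w : E) (hp : p ≠ 0) (hq : q ≠ 0)
    (hcs : ⟪p, q⟫ < ‖p‖ * ‖q‖) {t : ℝ}
    (hw : w = (1 - t) • p + t • q)
    (hang : InnerProductGeometry.angle p w = InnerProductGeometry.angle q w) :
    (‖p‖ + ‖q‖) * ‖w‖ ≤ ‖p‖ * ‖q‖ * Real.sqrt (2 * (1 + ⟪p, q⟫ / (‖p‖ * ‖q‖))) := by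
  have hrb : (0:ℝ) < ‖p‖ := norm_pos_iff.2 hp
  have hrc : (0:ℝ) < ‖q‖ := norm_pos_iff.2 hq
  have hcs' : -(‖p‖ * ‖q‖) ≤ ⟪p, q⟫ := neg_le_of_abs_le (abs_real_inner_le_norm p q)
  have hX : (0:ℝ) ≤ 2 * (1 + ⟪p, q⟫ / (‖p‖ * ‖q‖)) := by
    have : (-1:ℝ) ≤ ⟪p, q⟫ / (‖p‖ * ‖q‖) := by
      rw [le_div_iff₀ (by positivity)]; linarith
    linarith
  rcases eq_or_ne w 0 with h0 | h0
  · rw [h0, norm_zero, mul_zero]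
    positivity
  have hw0 : (0:ℝ) < ‖w‖ := norm_pos_iff.2 h0
  -- equal cosines
  have hcos : ⟪p, w⟫ / (‖p‖ * ‖w‖) = ⟪q, w⟫ / (‖q‖ * ‖w‖) := by
    have h := congrArg Real.cos hang
    rwa [InnerProductGeometry.cos_angle, InnerProductGeometry.cos_angle] at h
  have hpw : ⟪p, w⟫ = (1 - t) * ‖p‖ ^ 2 + t * ⟪p, q⟫ := by
    rw [hw]
    simp [inner_add_right, inner_smul_right, real_inner_self_eq_norm_sq]
  have hqw : ⟪q, w⟫ = (1 - t) * ⟪p, q⟫ + t * ‖q‖ ^ 2 := by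
    rw [hw]
    simp [inner_add_right, inner_smul_right, real_inner_self_eq_norm_sq,
      real_inner_comm q p]
  have hcross : ⟪p, w⟫ * ‖q‖ = ⟪q, w⟫ * ‖p‖ := by
    have h1 := (div_eq_div_iff (by positivity) (by positivity)).mp hcos
    have h2 : (⟪p, w⟫ * ‖q‖ - ⟪q, w⟫ * ‖p‖) * ‖w‖ = 0 := by linarith [h1]
    rcases mul_eq_zero.mp h2 with h3 | h3
    · linarith
    · exact absurd h3 (ne_of_gt hw0)
  have hfac : (‖p‖ * ‖q‖ - ⟪p, q⟫) * ((1 - t) * ‖p‖ - t * ‖q‖) = 0 := by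
    rw [hpw, hqw] at hcross
    linear_combination hcross
  have key : (1 - t) * ‖p‖ = t * ‖q‖ := by
    rcases mul_eq_zero.mp hfac with h3 | h3
    · linarith
    · linarith
  have hsum0 : ‖p‖ + ‖q‖ ≠ 0 := by positivity
  have ht : t = ‖p‖ / (‖p‖ + ‖q‖) :=
    (eq_div_iff hsum0).mpr (by linear_combination -key)
  have h1t : 1 - t = ‖q‖ / (‖p‖ + ‖q‖) :=
    (eq_div_iff hsum0).mpr (by linear_combination key)
  have hw2 : ‖w‖ ^ 2 = (1 - t) ^ 2 * ‖p‖ ^ 2 + 2 * ((1 - t) * t) * ⟪p, q⟫ + t ^ 2 * ‖q‖ ^ 2 := by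
    have : ‖w‖ ^ 2 = ⟪w, w⟫ := (real_inner_self_eq_norm_sq w).symm
    rw [this, hw]
    simp only [inner_add_left, inner_add_right, real_inner_smul_left, real_inner_smul_right]
    simp only [real_inner_self_eq_norm_sq, real_inner_comm q p]
    ring
  have hsq : ((‖p‖ + ‖q‖) * ‖w‖) ^ 2 = (‖p‖ * ‖q‖) ^ 2 * (2 * (1 + ⟪p, q⟫ / (‖p‖ * ‖q‖))) := by
    rw [mul_pow, hw2, h1t, ht]
    field_simp
    ring
  calc (‖p‖ + ‖q‖) * ‖w‖ = Real.sqrt (((‖p‖ + ‖q‖) * ‖w‖) ^ 2) :=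
        (Real.sqrt_sq (by positivity)).symm
    _ = Real.sqrt ((‖p‖ * ‖q‖) ^ 2 * (2 * (1 + ⟪p, q⟫ / (‖p‖ * ‖q‖)))) := by rw [hsq]
    _ = ‖p‖ * ‖q‖ * Real.sqrt (2 * (1 + ⟪p, q⟫ / (‖p‖ * ‖q‖))) := by
        rw [Real.sqrt_mul (sq_nonneg _), Real.sqrt_sq (by positivity)]
    _ ≤ _ := le_refl _

/-- The key algebraic inequality. -/
lemma key_ineq (x y z θ1 θ2 θ3 : ℝ) (hx : 0 ≤ x) (hy : 0 ≤ y) (hz : 0 ≤ z)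
    (h1 : 0 ≤ θ1) (h1' : θ1 ≤ π) (h2 : 0 ≤ θ2) (h2' : θ2 ≤ π) (h3 : 0 ≤ θ3) (h3' : θ3 ≤ π)
    (hsum : θ1 + θ2 + θ3 = 2 * π) :
    2 * y * z * Real.cos (θ1 / 2) + 2 * z * x * Real.cos (θ2 / 2) +
      2 * x * y * Real.cos (θ3 / 2) ≤ x ^ 2 + y ^ 2 + z ^ 2 := by
  have hθ1 : θ1 / 2 = π - (θ2 / 2 + θ3 / 2) := by linarith
  have hc : Real.cos (θ1 / 2) =
      Real.sin (θ2 / 2) * Real.sin (θ3 / 2) - Real.cos (θ2 / 2) * Real.cos (θ3 / 2) := by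
    rw [hθ1, Real.cos_pi_sub, Real.cos_add]; ring
  rw [hc]
  nlinarith [sq_nonneg (x - y * Real.cos (θ3 / 2) - z * Real.cos (θ2 / 2)),
    sq_nonneg (y * Real.sin (θ3 / 2) - z * Real.sin (θ2 / 2)),
    Real.sin_sq_add_cos_sq (θ2 / 2), Real.sin_sq_add_cos_sq (θ3 / 2),
    mul_nonneg hy hz, mul_nonneg hz hx, mul_nonneg hx hy]

end Helpers


set_option maxHeartbeats 1000000

theorem statement9 (A B C M A' B' C' : EuclideanSpace ℝ (Fin 2))
    (hABC : AffineIndependent ℝ ![A, B, C])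
    (hM : M ∈ interior (convexHull ℝ ({A, B, C} : Set (EuclideanSpace ℝ (Fin 2)))))
    (hA' : A' ∈ segment ℝ B C) (ha : ∠ B M A' = ∠ C M A')
    (hB' : B' ∈ segment ℝ C A) (hb : ∠ C M B' = ∠ A M B')
    (hC' : C' ∈ segment ℝ A B) (hc : ∠ A M C' = ∠ B M C') :
    dist M A + dist M B + dist M C ≥
      (Real.sqrt (dist M C / dist M B) + Real.sqrt (dist M B / dist M C)) * dist M A' +
      (Real.sqrt (dist M C / dist M A) + Real.sqrt (dist M A / dist M C)) * dist M B' +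
      (Real.sqrt (dist M A / dist M B) + Real.sqrt (dist M B / dist M A)) * dist M C' := by
  haveI : Fact (Module.finrank ℝ (EuclideanSpace ℝ (Fin 2)) = 2) :=
    ⟨finrank_euclideanSpace_fin⟩
  letI : Module.Oriented ℝ (EuclideanSpace ℝ (Fin 2)) (Fin 2) :=
    ⟨Module.Basis.orientation ((EuclideanSpace.basisFun (Fin 2) ℝ).toBasis)⟩
  set o : Orientation ℝ (EuclideanSpace ℝ (Fin 2)) (Fin 2) :=
    Module.Oriented.positiveOrientation with ho
  -- barycentric coordinates
  have hspan : affineSpan ℝ (Set.range ![A, B, C]) = ⊤ := by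
    rw [hABC.affineSpan_eq_top_iff_card_eq_finrank_add_one]
    simp [finrank_euclideanSpace_fin]
  let bas : AffineBasis (Fin 3) ℝ (EuclideanSpace ℝ (Fin 2)) := ⟨![A, B, C], hABC, hspan⟩
  have hbas : ⇑bas = ![A, B, C] := rfl
  have hrange : Set.range ⇑bas = ({A, B, C} : Set (EuclideanSpace ℝ (Fin 2))) := by
    rw [hbas]
    ext x
    constructor
    · rintro ⟨i, rfl⟩
      fin_cases i <;> simp
    · rintro (rfl | rfl | rfl)
      exacts [⟨0, rfl⟩, ⟨1, rfl⟩, ⟨2, rfl⟩]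
  rw [← hrange, bas.interior_convexHull] at hM
  set a := bas.coord 0 M with hadef
  set b := bas.coord 1 M with hbdef
  set c := bas.coord 2 M with hcdef
  have hca : 0 < a := hM 0
  have hcb : 0 < b := hM 1
  have hcc : 0 < c := hM 2
  have habc : a + b + c = 1 := by
    have := bas.sum_coord_apply_eq_one M
    rwa [Fin.sum_univ_three] at this
  have hMcomb : a • A + b • B + c • C = M := by
    have h := bas.affineCombination_coord_eq_self M
    rw [Finset.affineCombination_eq_linear_combination _ _ _
      (by rw [Fin.sum_univ_three]; exact habc)] at h
    rw [Fin.sum_univ_three] at h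
    simpa [hbas] using h
  have hrel : a • (A - M) + b • (B - M) + c • (C - M) = 0 := by
    have he : a • (A - M) + b • (B - M) + c • (C - M)
        = (a • A + b • B + c • C) - (a + b + c) • M := by module
    rw [he, hMcomb, habc, one_smul, sub_self]
  -- area form computations
  set p := A - M with hpdef
  set q := B - M with hqdef
  set r := C - M with hrdef
  set D := o.areaForm (B - A) (C - A) with hDdef
  have hnc : ¬Collinear ℝ ({A, B, C} : Set (EuclideanSpace ℝ (Fin 2))) :=
    affineIndependent_iff_not_collinear_set.mp hABC
  have hsgnD : (∡ B A C).sign ≠ 0 := by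
    intro h
    have h' := EuclideanGeometry.oangle_sign_eq_zero_iff_collinear.mp h
    rw [Set.insert_comm] at h'
    exact hnc h'
  have hoBAC : ∡ B A C = o.oangle (B - A) (C - A) := rfl
  have hDne : D ≠ 0 := by
    intro h
    apply hsgnD
    rw [hoBAC, sign_oangle_eq_sign_areaForm, ← hDdef, h, _root_.sign_zero]
  have hcr : c • r = -(a • p + b • q) := eq_neg_of_add_eq_zero_right hrel
  have h1 : c * o.areaForm q r = a * o.areaForm p q := by
    have h := congrArg (fun v => o.areaForm q v) hcr
    simpa [map_smul, map_add, map_neg, smul_eq_mul, o.areaForm_apply_self,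
      o.areaForm_swap q p] using h
  have h2 : c * o.areaForm r p = b * o.areaForm p q := by
    have h := congrArg (fun v => (o.areaForm v) p) hcr
    simp only [map_smul, map_add, map_neg, smul_eq_mul, LinearMap.smul_apply,
      LinearMap.add_apply, LinearMap.neg_apply] at h
    rw [o.areaForm_apply_self, o.areaForm_swap q p] at h
    linarith [h]
  have hDexp : D = o.areaForm q r + o.areaForm p q + o.areaForm r p := by
    have e1 : B - A = q - p := by rw [hpdef, hqdef]; abel
    have e2 : C - A = r - p := by rw [hpdef, hrdef]; abel
    rw [hDdef, e1, e2]
    simp only [map_sub, LinearMap.sub_apply]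
    rw [o.areaForm_apply_self, o.areaForm_swap r p, o.areaForm_swap q p]
    ring
  have hpq : o.areaForm p q = c * D := by
    rw [hDexp]
    linear_combination -h1 - h2 - (o.areaForm p q) * habc
  have hqr : o.areaForm q r = a * D := by
    have : c * o.areaForm q r = c * (a * D) := by rw [h1, hpq]; ring
    exact mul_left_cancel₀ (ne_of_gt hcc) this
  have hrp : o.areaForm r p = b * D := by
    have : c * o.areaForm r p = c * (b * D) := by rw [h2, hpq]; ring
    exact mul_left_cancel₀ (ne_of_gt hcc) this
  -- the three angles at M
  set θ1 := ∠ B M C with hθ1def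
  set θ2 := ∠ C M A with hθ2def
  set θ3 := ∠ A M B with hθ3def
  have hsAMB : (∡ A M B).sign = SignType.sign D := by
    rw [show ∡ A M B = o.oangle p q from rfl, sign_oangle_eq_sign_areaForm, hpq,
      sign_mul, sign_pos hcc, one_mul]
  have hsBMC : (∡ B M C).sign = SignType.sign D := by
    rw [show ∡ B M C = o.oangle q r from rfl, sign_oangle_eq_sign_areaForm, hqr,
      sign_mul, sign_pos hca, one_mul]
  have hsCMA : (∡ C M A).sign = SignType.sign D := by
    rw [show ∡ C M A = o.oangle r p from rfl, sign_oangle_eq_sign_areaForm, hrp,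
      sign_mul, sign_pos hcb, one_mul]
  have hsD : SignType.sign D ≠ 0 := by
    simp only [sign_ne_zero]
    exact hDne
  have hAM : A ≠ M := EuclideanGeometry.left_ne_of_oangle_sign_ne_zero
    (hsAMB ▸ hsD)
  have hBM : B ≠ M := EuclideanGeometry.left_ne_of_oangle_sign_ne_zero
    (hsBMC ▸ hsD)
  have hCM : C ≠ M := EuclideanGeometry.left_ne_of_oangle_sign_ne_zero
    (hsCMA ▸ hsD)
  -- each angle is strictly between 0 and π
  have hbound : ∀ X Y : EuclideanSpace ℝ (Fin 2), (∡ X M Y).sign ≠ 0 →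
      0 < ∠ X M Y ∧ ∠ X M Y < π := by
    intro X Y hsgn
    have hX : X ≠ M := EuclideanGeometry.left_ne_of_oangle_sign_ne_zero hsgn
    have hY : Y ≠ M := EuclideanGeometry.right_ne_of_oangle_sign_ne_zero hsgn
    rcases EuclideanGeometry.oangle_eq_angle_or_eq_neg_angle hX hY with h | h
    · constructor
      · rcases (EuclideanGeometry.angle_nonneg X M Y).lt_or_eq with h0 | h0
        · exact h0
        · exfalso; apply hsgn
          rw [h, ← h0, Real.Angle.coe_zero, Real.Angle.sign_zero]
      · rcases (EuclideanGeometry.angle_le_pi X M Y).lt_or_eq with h0 | h0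
        · exact h0
        · exfalso; apply hsgn
          rw [h, h0, Real.Angle.sign_coe_pi]
    · constructor
      · rcases (EuclideanGeometry.angle_nonneg X M Y).lt_or_eq with h0 | h0
        · exact h0
        · exfalso; apply hsgn
          rw [h, ← h0, Real.Angle.coe_zero, neg_zero, Real.Angle.sign_zero]
      · rcases (EuclideanGeometry.angle_le_pi X M Y).lt_or_eq with h0 | h0
        · exact h0
        · exfalso; apply hsgn
          rw [h, h0, Real.Angle.neg_coe_pi, Real.Angle.sign_coe_pi]
  obtain ⟨hθ1pos, hθ1lt⟩ := hbound B C (hsBMC ▸ hsD)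
  obtain ⟨hθ2pos, hθ2lt⟩ := hbound C A (hsCMA ▸ hsD)
  obtain ⟨hθ3pos, hθ3lt⟩ := hbound A B (hsAMB ▸ hsD)
  rw [← hθ1def] at hθ1pos hθ1lt
  rw [← hθ2def] at hθ2pos hθ2lt
  rw [← hθ3def] at hθ3pos hθ3lt
  -- sum of oriented angles is zero
  have hcyc : ∡ A M B + ∡ B M C + ∡ C M A = 0 :=
    EuclideanGeometry.oangle_add_cyc3 hAM hBM hCM
  have hcoe : ((θ1 + θ2 + θ3 : ℝ) : Real.Angle) = 0 := by
    rcases lt_or_gt_of_ne hDne with hneg | hpos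
    · have e3 : ∡ A M B = -(θ3 : Real.Angle) :=
        EuclideanGeometry.oangle_eq_neg_angle_of_sign_eq_neg_one
          (by rw [hsAMB, sign_neg hneg])
      have e1 : ∡ B M C = -(θ1 : Real.Angle) :=
        EuclideanGeometry.oangle_eq_neg_angle_of_sign_eq_neg_one
          (by rw [hsBMC, sign_neg hneg])
      have e2 : ∡ C M A = -(θ2 : Real.Angle) :=
        EuclideanGeometry.oangle_eq_neg_angle_of_sign_eq_neg_one
          (by rw [hsCMA, sign_neg hneg])
      rw [e3, e1, e2] at hcyc
      rw [show (θ1 + θ2 + θ3 : ℝ) = θ3 + θ1 + θ2 by ring, Real.Angle.coe_add,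
        Real.Angle.coe_add, show ((θ3 : Real.Angle) + ↑θ1 + ↑θ2)
          = -(-↑θ3 + -↑θ1 + -↑θ2) by abel, hcyc, neg_zero]
    · have e3 : ∡ A M B = (θ3 : Real.Angle) :=
        EuclideanGeometry.oangle_eq_angle_of_sign_eq_one (by rw [hsAMB, sign_pos hpos])
      have e1 : ∡ B M C = (θ1 : Real.Angle) :=
        EuclideanGeometry.oangle_eq_angle_of_sign_eq_one (by rw [hsBMC, sign_pos hpos])
      have e2 : ∡ C M A = (θ2 : Real.Angle) :=
        EuclideanGeometry.oangle_eq_angle_of_sign_eq_one (by rw [hsCMA, sign_pos hpos])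
      rw [e3, e1, e2] at hcyc
      rw [show (θ1 + θ2 + θ3 : ℝ) = θ3 + θ1 + θ2 by ring, Real.Angle.coe_add,
        Real.Angle.coe_add]
      exact hcyc
  -- hence the angle sum is 2π
  have hsum : θ1 + θ2 + θ3 = 2 * π := by
    have hcoe0 : ((θ1 + θ2 + θ3 : ℝ) : Real.Angle) = ((0 : ℝ) : Real.Angle) := by
      rw [hcoe, Real.Angle.coe_zero]
    obtain ⟨k, hk⟩ := Real.Angle.angle_eq_iff_two_pi_dvd_sub.mp hcoe0
    rw [sub_zero] at hk
    have hπ := Real.pi_pos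
    have hs0 : (0 : ℝ) < 2 * π * (k : ℝ) := by rw [← hk]; linarith
    have hs3 : 2 * π * (k : ℝ) < 3 * π := by rw [← hk]; linarith
    have hk0 : (0 : ℝ) < (k : ℝ) := by
      rcases le_or_gt (k : ℝ) 0 with h | h
      · nlinarith [mul_nonneg (le_of_lt hπ) (neg_nonneg.mpr h)]
      · exact h
    have hk2 : (k : ℝ) < 2 := by
      rcases le_or_gt 2 (k : ℝ) with h | h
      · nlinarith [mul_nonneg (le_of_lt hπ) (by linarith : (0:ℝ) ≤ (k : ℝ) - 2)]
      · exact h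
    have h01 : 0 < k := by exact_mod_cast hk0
    have h02 : k < 2 := by exact_mod_cast hk2
    have hk1 : k = 1 := by omega
    rw [hk1] at hk
    push_cast at hk
    linarith
  -- nonzero vectors and positive norms
  have hp0 : p ≠ 0 := sub_ne_zero_of_ne hAM
  have hq0 : q ≠ 0 := sub_ne_zero_of_ne hBM
  have hr0 : r ≠ 0 := sub_ne_zero_of_ne hCM
  have hnp : (0:ℝ) < ‖p‖ := norm_pos_iff.2 hp0
  have hnq : (0:ℝ) < ‖q‖ := norm_pos_iff.2 hq0
  have hnr : (0:ℝ) < ‖r‖ := norm_pos_iff.2 hr0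
  have hRA : dist M A = ‖p‖ := by rw [dist_eq_norm', hpdef]
  have hRB : dist M B = ‖q‖ := by rw [dist_eq_norm', hqdef]
  have hRC : dist M C = ‖r‖ := by rw [dist_eq_norm', hrdef]
  have hangle_eq : ∀ X Y : EuclideanSpace ℝ (Fin 2),
      ∠ X M Y = InnerProductGeometry.angle (X - M) (Y - M) := fun X Y => rfl
  -- cosine formulas
  have hcos1 : Real.cos θ1 = (inner ℝ q r : ℝ) / (‖q‖ * ‖r‖) := by
    rw [hθ1def, hangle_eq, InnerProductGeometry.cos_angle, hqdef, hrdef]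
  have hcos2 : Real.cos θ2 = (inner ℝ r p : ℝ) / (‖r‖ * ‖p‖) := by
    rw [hθ2def, hangle_eq, InnerProductGeometry.cos_angle, hrdef, hpdef]
  have hcos3 : Real.cos θ3 = (inner ℝ p q : ℝ) / (‖p‖ * ‖q‖) := by
    rw [hθ3def, hangle_eq, InnerProductGeometry.cos_angle, hpdef, hqdef]
  -- strict Cauchy-Schwarz from positive angles
  have hstrict : ∀ θ : ℝ, 0 < θ → θ ≤ π → Real.cos θ < 1 := by
    intro θ h0 hπ'
    have := Real.cos_lt_cos_of_nonneg_of_le_pi (le_refl 0) hπ' h0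
    rwa [Real.cos_zero] at this
  have hCS1 : (inner ℝ q r : ℝ) < ‖q‖ * ‖r‖ := by
    have h := hstrict θ1 hθ1pos hθ1lt.le
    rw [hcos1, div_lt_one (by positivity)] at h
    exact h
  have hCS2 : (inner ℝ r p : ℝ) < ‖r‖ * ‖p‖ := by
    have h := hstrict θ2 hθ2pos hθ2lt.le
    rw [hcos2, div_lt_one (by positivity)] at h
    exact h
  have hCS3 : (inner ℝ p q : ℝ) < ‖p‖ * ‖q‖ := by
    have h := hstrict θ3 hθ3pos hθ3lt.le
    rw [hcos3, div_lt_one (by positivity)] at h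
    exact h
  -- sqrt of distances
  set x := Real.sqrt (dist M A) with hxdef
  set y := Real.sqrt (dist M B) with hydef
  set z := Real.sqrt (dist M C) with hzdef
  have hxpos : 0 < x := Real.sqrt_pos.2 (by rw [hRA]; exact hnp)
  have hypos : 0 < y := Real.sqrt_pos.2 (by rw [hRB]; exact hnq)
  have hzpos : 0 < z := Real.sqrt_pos.2 (by rw [hRC]; exact hnr)
  -- half angle formula
  have hhalf : ∀ θ : ℝ, 0 ≤ θ → θ ≤ π →
      Real.sqrt (2 * (1 + Real.cos θ)) = 2 * Real.cos (θ / 2) := by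
    intro θ h0 hπ'
    rw [Real.cos_half (by linarith [Real.pi_pos]) hπ']
    rw [show 2 * (1 + Real.cos θ) = 2 ^ 2 * ((1 + Real.cos θ) / 2) by ring,
      Real.sqrt_mul (by positivity), Real.sqrt_sq (by norm_num)]
  -- generic per-term bound
  have hterm : ∀ (P1 P2 X : EuclideanSpace ℝ (Fin 2)) (θ : ℝ),
      P1 ≠ M → P2 ≠ M → (inner ℝ (P1 - M) (P2 - M) : ℝ) < ‖P1 - M‖ * ‖P2 - M‖ →
      θ = ∠ P1 M P2 → 0 < θ → θ < π →
      X ∈ segment ℝ P1 P2 → ∠ P1 M X = ∠ P2 M X →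
      (Real.sqrt (dist M P2 / dist M P1) + Real.sqrt (dist M P1 / dist M P2)) * dist M X ≤
        2 * Real.sqrt (dist M P1) * Real.sqrt (dist M P2) * Real.cos (θ / 2) := by
    intro P1 P2 X θ hP1 hP2 hCS hθdef hθ0 hθπ hseg hangeq
    obtain ⟨u, v, hu, hv, huv, hXc⟩ := hseg
    have hw : X - M = (1 - v) • (P1 - M) + v • (P2 - M) := by
      rw [← hXc, show u = 1 - v by linarith]
      module
    rw [hangle_eq, hangle_eq] at hangeq
    have hb1 := bisector_bound (P1 - M) (P2 - M) (X - M) (sub_ne_zero_of_ne hP1)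
      (sub_ne_zero_of_ne hP2) hCS hw hangeq
    have hn1 : (0:ℝ) < ‖P1 - M‖ := norm_pos_iff.2 (sub_ne_zero_of_ne hP1)
    have hn2 : (0:ℝ) < ‖P2 - M‖ := norm_pos_iff.2 (sub_ne_zero_of_ne hP2)
    have hR1 : dist M P1 = ‖P1 - M‖ := by rw [dist_eq_norm']
    have hR2 : dist M P2 = ‖P2 - M‖ := by rw [dist_eq_norm']
    have hℓ : dist M X = ‖X - M‖ := by rw [dist_eq_norm']
    have hd1 : 0 < dist M P1 := by rw [hR1]; exact hn1
    have hd2 : 0 < dist M P2 := by rw [hR2]; exact hn2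
    have hsd1 : 0 < Real.sqrt (dist M P1) := Real.sqrt_pos.2 hd1
    have hsd2 : 0 < Real.sqrt (dist M P2) := Real.sqrt_pos.2 hd2
    have hsq1 : Real.sqrt (dist M P1) * Real.sqrt (dist M P1) = dist M P1 :=
      Real.mul_self_sqrt dist_nonneg
    have hsq2 : Real.sqrt (dist M P2) * Real.sqrt (dist M P2) = dist M P2 :=
      Real.mul_self_sqrt dist_nonneg
    have hcosθ : Real.cos θ = (inner ℝ (P1 - M) (P2 - M) : ℝ) / (‖P1 - M‖ * ‖P2 - M‖) := by
      rw [hθdef, hangle_eq, InnerProductGeometry.cos_angle]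
    have hmain : (dist M P1 + dist M P2) * dist M X ≤
        dist M P1 * dist M P2 * (2 * Real.cos (θ / 2)) := by
      have e : Real.sqrt (2 * (1 + (inner ℝ (P1 - M) (P2 - M) : ℝ) / (‖P1 - M‖ * ‖P2 - M‖)))
          = 2 * Real.cos (θ / 2) := by
        rw [← hcosθ, hhalf θ hθ0.le hθπ.le]
      rw [hR1, hR2, hℓ]
      calc (‖P1 - M‖ + ‖P2 - M‖) * ‖X - M‖
          ≤ ‖P1 - M‖ * ‖P2 - M‖ *
            Real.sqrt (2 * (1 + (inner ℝ (P1 - M) (P2 - M) : ℝ) / (‖P1 - M‖ * ‖P2 - M‖))) := hb1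
        _ = ‖P1 - M‖ * ‖P2 - M‖ * (2 * Real.cos (θ / 2)) := by rw [e]
    have hcoeff : Real.sqrt (dist M P2 / dist M P1) + Real.sqrt (dist M P1 / dist M P2)
        = (dist M P1 + dist M P2) / (Real.sqrt (dist M P1) * Real.sqrt (dist M P2)) := by
      rw [Real.sqrt_div dist_nonneg, Real.sqrt_div dist_nonneg,
        div_add_div _ _ (ne_of_gt hsd1) (ne_of_gt hsd2), hsq1, hsq2, add_comm (dist M P2)]
    calc (Real.sqrt (dist M P2 / dist M P1) + Real.sqrt (dist M P1 / dist M P2)) * dist M X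
        = ((dist M P1 + dist M P2) * dist M X) /
          (Real.sqrt (dist M P1) * Real.sqrt (dist M P2)) := by
          rw [hcoeff, div_mul_eq_mul_div]
      _ ≤ (dist M P1 * dist M P2 * (2 * Real.cos (θ / 2))) /
          (Real.sqrt (dist M P1) * Real.sqrt (dist M P2)) := by
          gcongr
      _ = 2 * Real.sqrt (dist M P1) * Real.sqrt (dist M P2) * Real.cos (θ / 2) := by
          rw [div_eq_iff (ne_of_gt (mul_pos hsd1 hsd2))]
          linear_combination (-(2 * Real.cos (θ / 2))) *
            ((Real.sqrt (dist M P2) * Real.sqrt (dist M P2)) * hsq1 + dist M P1 * hsq2)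
  -- apply to the three cevians
  have key_a := hterm B C A' θ1 hBM hCM hCS1 hθ1def hθ1pos hθ1lt hA' ha
  have key_b := hterm C A B' θ2 hCM hAM hCS2 hθ2def hθ2pos hθ2lt hB' hb
  have key_c := hterm A B C' θ3 hAM hBM hCS3 hθ3def hθ3pos hθ3lt hC' hc
  -- final assembly
  rw [ge_iff_le]
  have hfin := key_ineq x y z θ1 θ2 θ3 hxpos.le hypos.le hzpos.le
    hθ1pos.le hθ1lt.le hθ2pos.le hθ2lt.le hθ3pos.le hθ3lt.le hsum
  have hx2 : x ^ 2 = dist M A := Real.sq_sqrt dist_nonneg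
  have hy2 : y ^ 2 = dist M B := Real.sq_sqrt dist_nonneg
  have hz2 : z ^ 2 = dist M C := Real.sq_sqrt dist_nonneg
  calc (Real.sqrt (dist M C / dist M B) + Real.sqrt (dist M B / dist M C)) * dist M A' +
      (Real.sqrt (dist M C / dist M A) + Real.sqrt (dist M A / dist M C)) * dist M B' +
      (Real.sqrt (dist M A / dist M B) + Real.sqrt (dist M B / dist M A)) * dist M C'
      ≤ 2 * y * z * Real.cos (θ1 / 2) + 2 * z * x * Real.cos (θ2 / 2) +
        2 * x * y * Real.cos (θ3 / 2) := by
        have e1 : 2 * Real.sqrt (dist M B) * Real.sqrt (dist M C) = 2 * y * z := by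
          rw [hydef, hzdef]
        have e2 : 2 * Real.sqrt (dist M C) * Real.sqrt (dist M A) = 2 * z * x := by
          rw [hzdef, hxdef]
        have e3 : 2 * Real.sqrt (dist M A) * Real.sqrt (dist M B) = 2 * x * y := by
          rw [hxdef, hydef]
        rw [e1] at key_a; rw [e2, add_comm (Real.sqrt (dist M A / dist M C))] at key_b
        rw [e3, add_comm (Real.sqrt (dist M B / dist M A))] at key_c
        exact add_le_add (add_le_add key_a key_b) key_c
    _ ≤ x ^ 2 + y ^ 2 + z ^ 2 := hfin
    _ = dist M A + dist M B + dist M C := by rw [hx2, hy2, hz2]
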